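/- For k, λ, β > 0 and t > 0, the identity ((β² + u²e^{-2kt})/(β² + u²))^{λ/(2k)} = exp(λ t (φ̃_L(u) - 1)) holds, where φ̃_L(u) = ∫_0^1 β²e^{2ktv}/(β²e^{2ktv} + u²) dv. -/

import Mathlib

/-- Compound Poisson representation of the symmetric bilateral Gamma-OU law at time `t`:
`((β² + u²e^{-2kt})/(β² + u²))^{λ/(2k)} = exp(λ t (φ̃_L(u) - 1))` where
`φ̃_L(u) = ∫_0^1 β²e^{2ktv}/(β²e^{2ktv} + u²) dv`. -/
theorem symmetric_bilateralGammaOU_compound_poisson_representation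
    (k lam β : ℝ) (hk : 0 < k) (hlam : 0 < lam) (hβ : 0 < β)
    (t : ℝ) (ht : 0 < t) (u : ℝ) :
    ((β ^ 2 + u ^ 2 * Real.exp (-2 * k * t)) / (β ^ 2 + u ^ 2)) ^ (lam / (2 * k))
      = Real.exp (lam * t *
          ((∫ v in (0:ℝ)..1,
              β ^ 2 * Real.exp (2 * k * t * v)
                / (β ^ 2 * Real.exp (2 * k * t * v) + u ^ 2)) - 1)) := by
  have hkt : (0:ℝ) < 2 * k * t := by positivity
  set f : ℝ → ℝ := fun v => Real.log (β ^ 2 * Real.exp (2 * k * t * v) + u ^ 2) / (2 * k * t)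
    with hf
  have hgpos : ∀ v : ℝ, 0 < β ^ 2 * Real.exp (2 * k * t * v) + u ^ 2 := by
    intro v; positivity
  have hderiv : ∀ v ∈ Set.uIcc (0:ℝ) 1, HasDerivAt f
      (β ^ 2 * Real.exp (2 * k * t * v) / (β ^ 2 * Real.exp (2 * k * t * v) + u ^ 2)) v := by
    intro v _
    have h1 : HasDerivAt (fun v : ℝ => β ^ 2 * Real.exp (2 * k * t * v) + u ^ 2)
        (β ^ 2 * (Real.exp (2 * k * t * v) * (2 * k * t))) v := by
      have := ((hasDerivAt_id v).const_mul (2 * k * t)).exp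
      simpa using ((this.const_mul (β ^ 2)).add_const (u ^ 2))
    have h2 := (h1.log (hgpos v).ne').div_const (2 * k * t)
    refine h2.congr_deriv ?_
    rw [div_div, div_eq_div_iff (by positivity) (hgpos v).ne']
    ring
  have hint : ∀ v ∈ Set.uIcc (0:ℝ) 1, ContinuousAt
      (fun v => β ^ 2 * Real.exp (2 * k * t * v) / (β ^ 2 * Real.exp (2 * k * t * v) + u ^ 2)) v := by
    intro v _
    exact ContinuousAt.div (by fun_prop) (by fun_prop) (hgpos v).ne'
  have hI : (∫ v in (0:ℝ)..1,
        β ^ 2 * Real.exp (2 * k * t * v) / (β ^ 2 * Real.exp (2 * k * t * v) + u ^ 2))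
      = f 1 - f 0 := by
    refine intervalIntegral.integral_eq_sub_of_hasDerivAt hderiv ?_
    exact (ContinuousOn.intervalIntegrable (fun v hv => (hint v hv).continuousWithinAt))
  rw [hI]
  have hA : (0:ℝ) < β ^ 2 + u ^ 2 * Real.exp (-2 * k * t) := by positivity
  have hB : (0:ℝ) < β ^ 2 + u ^ 2 := by positivity
  rw [Real.rpow_def_of_pos (by positivity : (0:ℝ) < (β ^ 2 + u ^ 2 * Real.exp (-2 * k * t)) / (β ^ 2 + u ^ 2))]
  congr 1
  have hexp : Real.exp (-2 * k * t) * Real.exp (2 * k * t) = 1 := by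
    rw [← Real.exp_add]; norm_num
  have hkey : β ^ 2 + u ^ 2 * Real.exp (-2 * k * t)
      = Real.exp (-2 * k * t) * (β ^ 2 * Real.exp (2 * k * t) + u ^ 2) := by
    linear_combination (-β ^ 2) * hexp
  have hX : (0:ℝ) < β ^ 2 * Real.exp (2 * k * t) + u ^ 2 := by positivity
  rw [Real.log_div hA.ne' hB.ne', hkey, Real.log_mul (Real.exp_ne_zero _) hX.ne',
    Real.log_exp]
  simp only [hf]
  rw [show (2:ℝ) * k * t * 1 = 2 * k * t by ring, show (2:ℝ) * k * t * 0 = 0 by ring,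
    Real.exp_zero, mul_one]
  field_simp
  ring
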